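/- Let x be an optimal half-integral fractional vertex cover of a graph G, let V_{1/2} = {v : x(v) = 1/2}, let G_{1/2} be the subgraph of G induced by V_{1/2}, and let m be the maximum size of a matching in G_{1/2}. Then every vertex cover of G_{1/2} has size at least |V_{1/2}| − m. -/

import Mathlib

open scoped Classical

/-- A fractional vertex cover of `G`: `0 ≤ x v ≤ 1` and `x u + x v ≥ 1` for every edge. -/
def IsFracVertexCover {V : Type*} (G : SimpleGraph V) (x : V → ℝ) : Prop :=
  (∀ v : V, 0 ≤ x v ∧ x v ≤ 1) ∧ ∀ ⦃u w : V⦄, G.Adj u w → 1 ≤ x u + x w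

/-- A matching of the subgraph of `G` induced by `S`: a set of pairwise disjoint edges of `G`
with all endpoints in `S`. -/
def IsMatchingOn {V : Type*} (G : SimpleGraph V) (S : Finset V) (M : Finset (Sym2 V)) :
    Prop :=
  (∀ e ∈ M, e ∈ G.edgeSet) ∧ (∀ e ∈ M, ∀ v ∈ e, v ∈ S) ∧
  (∀ e ∈ M, ∀ f ∈ M, e ≠ f → ∀ v : V, v ∈ e → v ∉ f)

/-- A vertex cover of the subgraph of `G` induced by `S`: a subset of `S` containing an
endpoint of every edge of `G` with both endpoints in `S`. -/
def IsVertexCoverOn {V : Type*} (G : SimpleGraph V) (S : Finset V) (C : Finset V) : Prop :=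
  (∀ v ∈ C, v ∈ S) ∧ ∀ ⦃u w : V⦄, G.Adj u w → u ∈ S → w ∈ S → u ∈ C ∨ w ∈ C

/-- Key expansion lemma: for an optimal half-integral cover, every independent subset of `V½`
has at least as many neighbors in `V½`. -/
lemma key_expansion {V : Type*} [Fintype V] (G : SimpleGraph V)
    (x : V → ℝ) (hx : IsFracVertexCover G x)
    (hopt : ∀ y : V → ℝ, IsFracVertexCover G y → ∑ v, x v ≤ ∑ v, y v)
    (hhalf : ∀ v : V, x v = 0 ∨ x v = 1/2 ∨ x v = 1)
    (Vh : Finset V) (hVh : ∀ v : V, v ∈ Vh ↔ x v = 1/2)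
    (I : Finset V) (hIVh : I ⊆ Vh)
    (hInd : ∀ u ∈ I, ∀ w ∈ I, ¬ G.Adj u w) :
    I.card ≤ (Vh.filter (fun w => ∃ i ∈ I, G.Adj i w)).card := by
  set N := Vh.filter (fun w => ∃ i ∈ I, G.Adj i w) with hN
  by_contra hlt
  push_neg at hlt
  have hIN : Disjoint I N := by
    rw [Finset.disjoint_left]
    intro a haI haN
    rw [hN, Finset.mem_filter] at haN
    obtain ⟨-, i, hiI, hadj⟩ := haN
    exact hInd i hiI a haI hadj
  set y : V → ℝ := fun v => if v ∈ I then 0 else if v ∈ N then 1 else x v with hy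
  have hyfvc : IsFracVertexCover G y := by
    constructor
    · intro v
      simp only [hy]
      split_ifs with h1 h2
      · norm_num
      · norm_num
      · exact hx.1 v
    · intro u w hadj
      have hne : u ≠ w := hadj.ne
      by_cases huI : u ∈ I
      · by_cases hwI : w ∈ I
        · exact absurd hadj (hInd u huI w hwI)
        · have hw1 : y w = 1 := by
            by_cases hwVh : w ∈ Vh
            · have : w ∈ N := by
                rw [hN, Finset.mem_filter]
                exact ⟨hwVh, u, huI, hadj⟩
              simp [hy, hwI, this]
            · -- x w = 1
              have hxu : x u = 1/2 := (hVh u).mp (hIVh huI)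
              have := hx.2 hadj
              have hxw : x w = 1 := by
                rcases hhalf w with h | h | h
                · rw [hxu, h] at this; linarith
                · exact absurd ((hVh w).mpr h) hwVh
                · exact h
              have hwN : w ∉ N := fun h => hwVh (Finset.mem_filter.mp h).1
              simp [hy, hwI, hwN, hxw]
          have : y u = 0 := by simp [hy, huI]
          rw [this, hw1]; norm_num
      · by_cases hwI : w ∈ I
        · have hu1 : y u = 1 := by
            by_cases huVh : u ∈ Vh
            · have : u ∈ N := by
                rw [hN, Finset.mem_filter]
                exact ⟨huVh, w, hwI, hadj.symm⟩
              simp [hy, huI, this]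
            · have hxw : x w = 1/2 := (hVh w).mp (hIVh hwI)
              have := hx.2 hadj
              have hxu : x u = 1 := by
                rcases hhalf u with h | h | h
                · rw [hxw, h] at this; linarith
                · exact absurd ((hVh u).mpr h) huVh
                · exact h
              have huN : u ∉ N := fun h => huVh (Finset.mem_filter.mp h).1
              simp [hy, huI, huN, hxu]
          have hw0 : 0 ≤ y w := by
            simp only [hy]; split_ifs with h1 h2 <;> first | norm_num | exact (hx.1 w).1
          rw [hu1]; linarith
        · have hu : x u ≤ y u := by
            simp only [hy, huI, if_false]
            split_ifs with h
            · exact (hx.1 u).2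
            · exact le_rfl
          have hw : x w ≤ y w := by
            simp only [hy, hwI, if_false]
            split_ifs with h
            · exact (hx.1 w).2
            · exact le_rfl
          have := hx.2 hadj
          linarith
  have hsum : ∑ v, y v < ∑ v, x v := by
    have hdiff : ∑ v, (y v - x v) = ∑ v ∈ I ∪ N, (y v - x v) := by
      refine (Finset.sum_subset (Finset.subset_univ _) ?_).symm
      intro v _ hv
      rw [Finset.mem_union] at hv
      push_neg at hv
      simp [hy, hv.1, hv.2]
    have hIsum : ∑ v ∈ I, (y v - x v) = -(I.card : ℝ) / 2 := by
      have hc : ∀ v ∈ I, y v - x v = -(1:ℝ)/2 := by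
        intro v hv
        have hxv : x v = 1/2 := (hVh v).mp (hIVh hv)
        simp only [hy]
        rw [if_pos hv, hxv]; norm_num
      rw [Finset.sum_congr rfl hc, Finset.sum_const, nsmul_eq_mul]; ring
    have hNsum : ∑ v ∈ N, (y v - x v) = (N.card : ℝ) / 2 := by
      have hc : ∀ v ∈ N, y v - x v = (1:ℝ)/2 := by
        intro v hv
        have hvI : v ∉ I := Finset.disjoint_right.mp hIN hv
        have hxv : x v = 1/2 := (hVh v).mp ((Finset.mem_filter.mp hv).1)
        simp only [hy]
        rw [if_neg hvI, if_pos hv, hxv]; norm_num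
      rw [Finset.sum_congr rfl hc, Finset.sum_const, nsmul_eq_mul]; ring
    have : ∑ v, (y v - x v) < 0 := by
      rw [hdiff, Finset.sum_union hIN, hIsum, hNsum]
      have : (N.card : ℝ) < I.card := by exact_mod_cast hlt
      linarith
    have h2 : ∑ v, (y v - x v) = ∑ v, y v - ∑ v, x v := Finset.sum_sub_distrib _ _
    linarith
  exact absurd (hopt y hyfvc) (not_le.mpr hsum)

theorem vertexCover_of_halfGraph_lower_bound {V : Type*} [Fintype V] (G : SimpleGraph V)
    (x : V → ℝ) (hx : IsFracVertexCover G x)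
    (hopt : ∀ y : V → ℝ, IsFracVertexCover G y → ∑ v, x v ≤ ∑ v, y v)
    (hhalf : ∀ v : V, x v = 0 ∨ x v = 1/2 ∨ x v = 1)
    (Vh : Finset V) (hVh : ∀ v : V, v ∈ Vh ↔ x v = 1/2)
    (M : Finset (Sym2 V)) (hM : IsMatchingOn G Vh M)
    (hMmax : ∀ M' : Finset (Sym2 V), IsMatchingOn G Vh M' → M'.card ≤ M.card)
    (C : Finset V) (hC : IsVertexCoverOn G Vh C) :
    Vh.card ≤ C.card + M.card := by
  classical
  set I := Vh \ C with hI
  have hIVh : I ⊆ Vh := Finset.sdiff_subset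
  have hInd : ∀ u ∈ I, ∀ w ∈ I, ¬ G.Adj u w := by
    intro u hu w hw hadj
    rw [hI, Finset.mem_sdiff] at hu hw
    rcases hC.2 hadj hu.1 hw.1 with h | h
    · exact hu.2 h
    · exact hw.2 h
  -- Hall condition and matching construction
  set t : {v // v ∈ I} → Finset V := fun i => Vh.filter (fun w => G.Adj i.1 w) with ht
  have hall : ∀ s : Finset {v // v ∈ I}, s.card ≤ (s.biUnion t).card := by
    intro s
    set I' := s.image (fun i => i.1) with hI'
    have hcard : I'.card = s.card := Finset.card_image_of_injective _ Subtype.val_injective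
    have hI'I : I' ⊆ I := by
      intro v hv
      rw [hI', Finset.mem_image] at hv
      obtain ⟨i, -, rfl⟩ := hv
      exact i.2
    have h1 : I'.card ≤ (Vh.filter (fun w => ∃ i ∈ I', G.Adj i w)).card :=
      key_expansion G x hx hopt hhalf Vh hVh I' (hI'I.trans hIVh)
        (fun u hu w hw => hInd u (hI'I hu) w (hI'I hw))
    have h2 : Vh.filter (fun w => ∃ i ∈ I', G.Adj i w) ⊆ s.biUnion t := by
      intro w hw
      rw [Finset.mem_filter] at hw
      obtain ⟨hwVh, i, hiI', hadj⟩ := hw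
      rw [hI', Finset.mem_image] at hiI'
      obtain ⟨j, hjs, rfl⟩ := hiI'
      rw [Finset.mem_biUnion]
      exact ⟨j, hjs, Finset.mem_filter.mpr ⟨hwVh, hadj⟩⟩
    calc s.card = I'.card := hcard.symm
      _ ≤ _ := h1
      _ ≤ _ := Finset.card_le_card h2
  obtain ⟨f, hfinj, hft⟩ := (Finset.all_card_le_biUnion_card_iff_exists_injective t).mp hall
  -- f i is in Vh, adjacent to i, and not in I
  have hfVh : ∀ i, f i ∈ Vh := fun i => (Finset.mem_filter.mp (hft i)).1
  have hfadj : ∀ i, G.Adj i.1 (f i) := fun i => (Finset.mem_filter.mp (hft i)).2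
  have hfI : ∀ (i j : {v // v ∈ I}), f i ≠ j.1 := by
    intro i j h
    exact hInd i.1 i.2 j.1 j.2 (h ▸ hfadj i)
  set M' : Finset (Sym2 V) := I.attach.image (fun i => s(i.1, f i)) with hM'
  have hM'match : IsMatchingOn G Vh M' := by
    refine ⟨?_, ?_, ?_⟩
    · intro e he
      rw [hM', Finset.mem_image] at he
      obtain ⟨i, -, rfl⟩ := he
      exact hfadj i
    · intro e he v hv
      rw [hM', Finset.mem_image] at he
      obtain ⟨i, -, rfl⟩ := he
      rw [Sym2.mem_iff] at hv
      rcases hv with rfl | rfl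
      · exact hIVh i.2
      · exact hfVh i
    · intro e he e' he' hne v hve hve'
      rw [hM', Finset.mem_image] at he he'
      obtain ⟨i, -, rfl⟩ := he
      obtain ⟨j, -, rfl⟩ := he'
      rw [Sym2.mem_iff] at hve hve'
      have hij : i ≠ j := fun h => hne (by rw [h])
      rcases hve with h1 | h1 <;> rcases hve' with h2 | h2
      · exact hij (Subtype.ext (h1.symm.trans h2))
      · exact hfI j i (h2.symm.trans h1)
      · exact hfI i j (h1.symm.trans h2)
      · exact hij (hfinj (h1.symm.trans h2))
  have hcardM' : M'.card = I.card := by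
    rw [hM', Finset.card_image_of_injOn ?_, Finset.card_attach]
    intro a _ b _ h
    rw [Sym2.eq_iff] at h
    rcases h with ⟨h1, -⟩ | ⟨h1, h2⟩
    · exact Subtype.ext h1
    · exact (hfI b a h1.symm).elim
  have hIM : I.card ≤ M.card := hcardM' ▸ hMmax M' hM'match
  calc Vh.card ≤ (C ∪ I).card := Finset.card_le_card (by
        intro v hv
        rw [Finset.mem_union, hI, Finset.mem_sdiff]
        by_cases h : v ∈ C
        · exact Or.inl h
        · exact Or.inr ⟨hv, h⟩)
    _ ≤ C.card + I.card := Finset.card_union_le _ _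
    _ ≤ C.card + M.card := by omega
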